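/- Fix a real number q > 0 with q ≠ 1 and half-integers j₁, j₂ ≥ 0. On the tensor product of the spin-j₁ and spin-j₂ representations, let the daggers be the entrywise dualizations ⟨e_m, X† e_n⟩ = (−1)^{(j+m)+(j+n)} q^{(m−n)/2} ⟨e_{−n}, X e_{−m}⟩ on the respective factors (j = j₁ for the first factor, j = j₂ for the second). Then the adjoint of the invariant pairing reproduces the invariant pairing with the roles of t and t^op exchanged: Σ_{A = −1,0,1} (t^op_{−A})† ⊗ (t_A)† = Σ_{A = −1,0,1} t_{−A} ⊗ t^op_A as operators on ℝ^{2j₁+1} ⊗ ℝ^{2j₂+1}, where in each summand the first factor acts on the spin-j₁ space and the second on the spin-j₂ space. -/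

import Mathlib

/-! STATEMENT 15: the adjoint of the invariant pairing exchanges t and t^op. -/

open Kronecker

noncomputable section

/-- The q-number [x] = (q^{x/2} − q^{−x/2})/(q^{1/2} − q^{−1/2}). -/
def qnum (q x : ℝ) : ℝ :=
  (q ^ (x / 2) - q ^ (-x / 2)) / (q ^ ((1 : ℝ) / 2) - q ^ (-(1 : ℝ) / 2))

/-- The magnetic number m = i − j attached to the basis index i, where j = n/2. -/
def mval (n : ℕ) (i : Fin (n + 1)) : ℝ := ((i : ℕ) : ℝ) - (n : ℝ) / 2

/-- The operator K of the spin-(n/2) representation. -/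
def Kmat (q : ℝ) (n : ℕ) : Matrix (Fin (n + 1)) (Fin (n + 1)) ℝ :=
  Matrix.diagonal fun i => q ^ (mval n i / 2)

/-- The operator K⁻¹ of the spin-(n/2) representation. -/
def Kinvmat (q : ℝ) (n : ℕ) : Matrix (Fin (n + 1)) (Fin (n + 1)) ℝ :=
  Matrix.diagonal fun i => q ^ (-(mval n i) / 2)

/-- The raising operator J₊ of the spin-(n/2) representation:
J₊ e_m = √([j−m][j+m+1]) e_{m+1}. -/
def Jpmat (q : ℝ) (n : ℕ) : Matrix (Fin (n + 1)) (Fin (n + 1)) ℝ :=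
  Matrix.of fun i i' =>
    if (i : ℕ) = (i' : ℕ) + 1 then
      Real.sqrt (qnum q ((n : ℝ) - ((i' : ℕ) : ℝ)) * qnum q (((i' : ℕ) : ℝ) + 1))
    else 0

/-- The lowering operator J₋ of the spin-(n/2) representation:
J₋ e_m = √([j+m][j−m+1]) e_{m−1}. -/
def Jmmat (q : ℝ) (n : ℕ) : Matrix (Fin (n + 1)) (Fin (n + 1)) ℝ :=
  Matrix.of fun i i' =>
    if (i : ℕ) + 1 = (i' : ℕ) then
      Real.sqrt (qnum q (((i' : ℕ) : ℝ)) * qnum q ((n : ℝ) - ((i' : ℕ) : ℝ) + 1))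
    else 0

/-- The component t₁ = K J₊ of the vector operator t. -/
def tOne (q : ℝ) (n : ℕ) : Matrix (Fin (n + 1)) (Fin (n + 1)) ℝ :=
  Kmat q n * Jpmat q n

/-- The component t₀ = −(q^{−1/2} J₊J₋ − q^{1/2} J₋J₊)/√[2] of the vector operator t. -/
def tZero (q : ℝ) (n : ℕ) : Matrix (Fin (n + 1)) (Fin (n + 1)) ℝ :=
  -((Real.sqrt (qnum q 2))⁻¹ •
    (q ^ (-(1 : ℝ) / 2) • (Jpmat q n * Jmmat q n) - q ^ ((1 : ℝ) / 2) • (Jmmat q n * Jpmat q n)))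

/-- The component t₋₁ = −K J₋ of the vector operator t. -/
def tNegOne (q : ℝ) (n : ℕ) : Matrix (Fin (n + 1)) (Fin (n + 1)) ℝ :=
  -(Kmat q n * Jmmat q n)

/-- The component t^op₁ = J₊ K⁻¹ of the operator t^op. -/
def topOne (q : ℝ) (n : ℕ) : Matrix (Fin (n + 1)) (Fin (n + 1)) ℝ :=
  Jpmat q n * Kinvmat q n

/-- The component t^op₀ = (q^{1/2} J₊J₋ − q^{−1/2} J₋J₊)/√[2] of the operator t^op. -/
def topZero (q : ℝ) (n : ℕ) : Matrix (Fin (n + 1)) (Fin (n + 1)) ℝ :=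
  (Real.sqrt (qnum q 2))⁻¹ •
    (q ^ ((1 : ℝ) / 2) • (Jpmat q n * Jmmat q n) - q ^ (-(1 : ℝ) / 2) • (Jmmat q n * Jpmat q n))

/-- The component t^op₋₁ = −J₋ K⁻¹ of the operator t^op. -/
def topNegOne (q : ℝ) (n : ℕ) : Matrix (Fin (n + 1)) (Fin (n + 1)) ℝ :=
  -(Jmmat q n * Kinvmat q n)

/-- The index flip i ↦ n − i, exchanging e_m and e_{−m}. -/
def flipIdx (n : ℕ) (i : Fin (n + 1)) : Fin (n + 1) := ⟨n - (i : ℕ), by omega⟩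

/-- Entrywise dualization:
⟨e_m, X† e_n⟩ = (−1)^{(j+m)+(j+n)} q^{(m−n)/2} ⟨e_{−n}, X e_{−m}⟩. -/
def dualize (q : ℝ) (n : ℕ) (X : Matrix (Fin (n + 1)) (Fin (n + 1)) ℝ) :
    Matrix (Fin (n + 1)) (Fin (n + 1)) ℝ :=
  Matrix.of fun i i' =>
    (-1 : ℝ) ^ ((i : ℕ) + (i' : ℕ)) * q ^ ((mval n i - mval n i') / 2)
      * X (flipIdx n i') (flipIdx n i)

lemma flipIdx_flip_flip (n : ℕ) (i : Fin (n + 1)) : flipIdx n (flipIdx n i) = i := by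
  have h := i.isLt
  apply Fin.ext
  simp only [flipIdx]
  omega

/-- The flip as an equivalence. -/
def flipEquiv (n : ℕ) : Fin (n + 1) ≃ Fin (n + 1) :=
  ⟨flipIdx n, flipIdx n, flipIdx_flip_flip n, flipIdx_flip_flip n⟩

lemma cast_flip (n : ℕ) (i : Fin (n + 1)) :
    (((flipIdx n i : Fin (n + 1)) : ℕ) : ℝ) = (n : ℝ) - ((i : ℕ) : ℝ) := by
  have h := i.isLt
  simp only [flipIdx]
  rw [Nat.cast_sub (by omega)]

lemma mval_flip (n : ℕ) (i : Fin (n + 1)) : mval n (flipIdx n i) = - mval n i := by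
  unfold mval
  rw [cast_flip]
  ring

lemma dualize_mul {q : ℝ} (hq : 0 < q) (n : ℕ) (X Y : Matrix (Fin (n + 1)) (Fin (n + 1)) ℝ) :
    dualize q n (X * Y) = dualize q n Y * dualize q n X := by
  ext i i'
  simp only [dualize, Matrix.mul_apply, Matrix.of_apply]
  rw [Finset.mul_sum]
  refine Fintype.sum_equiv (flipEquiv n) _ _ fun k0 => ?_
  simp only [flipEquiv, Equiv.coe_fn_mk, flipIdx_flip_flip]
  set k := flipIdx n k0 with hk
  have h1 : ((-1 : ℝ)) ^ ((i : ℕ) + (k : ℕ)) * (-1 : ℝ) ^ ((k : ℕ) + (i' : ℕ)) =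
      (-1 : ℝ) ^ ((i : ℕ) + (i' : ℕ)) := by
    rw [← pow_add]
    have : (i : ℕ) + (k : ℕ) + ((k : ℕ) + (i' : ℕ)) = ((i : ℕ) + (i' : ℕ)) + 2 * (k : ℕ) := by
      omega
    rw [this, pow_add, pow_mul]
    norm_num
  have h2 : q ^ ((mval n i - mval n k) / 2) * q ^ ((mval n k - mval n i') / 2) =
      q ^ ((mval n i - mval n i') / 2) := by
    rw [← Real.rpow_add hq]
    ring_nf
  calc (-1 : ℝ) ^ ((i : ℕ) + (i' : ℕ)) * q ^ ((mval n i - mval n i') / 2) *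
      (X (flipIdx n i') k0 * Y k0 (flipIdx n i))
      = ((-1 : ℝ)) ^ ((i : ℕ) + (k : ℕ)) * (-1 : ℝ) ^ ((k : ℕ) + (i' : ℕ)) *
        (q ^ ((mval n i - mval n k) / 2) * q ^ ((mval n k - mval n i') / 2)) *
        (X (flipIdx n i') k0 * Y k0 (flipIdx n i)) := by
        rw [h1, h2]
    _ = _ := by ring

lemma dualize_smul {q : ℝ} (n : ℕ) (a : ℝ) (X : Matrix (Fin (n + 1)) (Fin (n + 1)) ℝ) :
    dualize q n (a • X) = a • dualize q n X := by
  ext i i'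
  simp only [dualize, Matrix.of_apply, Matrix.smul_apply, smul_eq_mul]
  ring

lemma dualize_neg {q : ℝ} (n : ℕ) (X : Matrix (Fin (n + 1)) (Fin (n + 1)) ℝ) :
    dualize q n (-X) = - dualize q n X := by
  ext i i'
  simp only [dualize, Matrix.of_apply, Matrix.neg_apply]
  ring

lemma dualize_sub {q : ℝ} (n : ℕ) (X Y : Matrix (Fin (n + 1)) (Fin (n + 1)) ℝ) :
    dualize q n (X - Y) = dualize q n X - dualize q n Y := by
  ext i i'
  simp only [dualize, Matrix.of_apply, Matrix.sub_apply]
  ring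

lemma dualize_K {q : ℝ} (n : ℕ) : dualize q n (Kmat q n) = Kinvmat q n := by
  ext i i'
  by_cases h : i = i'
  · subst h
    simp only [dualize, Kmat, Kinvmat, Matrix.of_apply, Matrix.diagonal_apply_eq,
      mval_flip, sub_self, zero_div, Real.rpow_zero, mul_one]
    have hp : (-1 : ℝ) ^ ((i : ℕ) + (i : ℕ)) = 1 := by
      rw [← two_mul, pow_mul]; norm_num
    rw [hp, one_mul]
  · simp only [dualize, Kmat, Kinvmat, Matrix.of_apply]
    have h2 : flipIdx n i' ≠ flipIdx n i := by
      intro hc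
      apply h
      have := congrArg (flipIdx n) hc
      rwa [flipIdx_flip_flip, flipIdx_flip_flip, eq_comm] at this
    rw [Matrix.diagonal_apply_ne _ h2, Matrix.diagonal_apply_ne _ h]
    ring

lemma dualize_Kinv {q : ℝ} (n : ℕ) : dualize q n (Kinvmat q n) = Kmat q n := by
  ext i i'
  by_cases h : i = i'
  · subst h
    simp only [dualize, Kmat, Kinvmat, Matrix.of_apply, Matrix.diagonal_apply_eq,
      mval_flip, sub_self, zero_div, Real.rpow_zero, mul_one, neg_neg]
    have hp : (-1 : ℝ) ^ ((i : ℕ) + (i : ℕ)) = 1 := by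
      rw [← two_mul, pow_mul]; norm_num
    rw [hp, one_mul]
  · simp only [dualize, Kmat, Kinvmat, Matrix.of_apply]
    have h2 : flipIdx n i' ≠ flipIdx n i := by
      intro hc
      apply h
      have := congrArg (flipIdx n) hc
      rwa [flipIdx_flip_flip, flipIdx_flip_flip, eq_comm] at this
    rw [Matrix.diagonal_apply_ne _ h2, Matrix.diagonal_apply_ne _ h]
    ring

lemma dualize_Jp {q : ℝ} (n : ℕ) :
    dualize q n (Jpmat q n) = (-(q ^ ((1 : ℝ) / 2))) • Jpmat q n := by
  ext i i'
  have hi := i.isLt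
  have hi' := i'.isLt
  simp only [dualize, Jpmat, Matrix.of_apply, Matrix.smul_apply, smul_eq_mul, flipIdx]
  by_cases h : (i : ℕ) = (i' : ℕ) + 1
  · rw [if_pos (by omega), if_pos h]
    have e1 : ((n - (i : ℕ) : ℕ) : ℝ) = (n : ℝ) - ((i : ℕ) : ℝ) := by
      rw [Nat.cast_sub (by omega)]
    have e2 : (((i : ℕ) : ℝ)) = ((i' : ℕ) : ℝ) + 1 := by
      exact_mod_cast congrArg (Nat.cast : ℕ → ℝ) h
    have hm : (mval n i - mval n i') / 2 = (1 : ℝ) / 2 := by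
      unfold mval
      rw [e2]; ring
    have hpow : (-1 : ℝ) ^ ((i : ℕ) + (i' : ℕ)) = -1 := by
      have : (i : ℕ) + (i' : ℕ) = 2 * (i' : ℕ) + 1 := by omega
      rw [this, pow_succ, pow_mul]
      norm_num
    rw [hm, hpow, e1]
    have hargs : qnum q ((n : ℝ) - ((n : ℝ) - ((i : ℕ) : ℝ))) *
        qnum q (((n : ℝ) - ((i : ℕ) : ℝ)) + 1) =
        qnum q ((n : ℝ) - ((i' : ℕ) : ℝ)) * qnum q (((i' : ℕ) : ℝ) + 1) := by
      have a1 : (n : ℝ) - ((n : ℝ) - ((i : ℕ) : ℝ)) = ((i' : ℕ) : ℝ) + 1 := by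
        rw [e2]; ring
      have a2 : ((n : ℝ) - ((i : ℕ) : ℝ)) + 1 = (n : ℝ) - ((i' : ℕ) : ℝ) := by
        rw [e2]; ring
      rw [a1, a2]; ring
    rw [hargs]
    ring
  · rw [if_neg (by omega), if_neg h]
    ring

lemma dualize_Jm {q : ℝ} (n : ℕ) :
    dualize q n (Jmmat q n) = (-(q ^ (-(1 : ℝ) / 2))) • Jmmat q n := by
  ext i i'
  have hi := i.isLt
  have hi' := i'.isLt
  simp only [dualize, Jmmat, Matrix.of_apply, Matrix.smul_apply, smul_eq_mul, flipIdx]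
  by_cases h : (i : ℕ) + 1 = (i' : ℕ)
  · rw [if_pos (by omega), if_pos h]
    have e1 : ((n - (i : ℕ) : ℕ) : ℝ) = (n : ℝ) - ((i : ℕ) : ℝ) := by
      rw [Nat.cast_sub (by omega)]
    have e2 : ((i' : ℕ) : ℝ) = ((i : ℕ) : ℝ) + 1 := by
      exact_mod_cast congrArg (Nat.cast : ℕ → ℝ) h.symm
    have hm : (mval n i - mval n i') / 2 = (-1 : ℝ) / 2 := by
      unfold mval
      rw [e2]; ring
    have hpow : (-1 : ℝ) ^ ((i : ℕ) + (i' : ℕ)) = -1 := by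
      have : (i : ℕ) + (i' : ℕ) = 2 * (i : ℕ) + 1 := by omega
      rw [this, pow_succ, pow_mul]
      norm_num
    rw [hm, hpow, e1]
    have hargs : qnum q ((n : ℝ) - ((i : ℕ) : ℝ)) *
        qnum q ((n : ℝ) - ((n : ℝ) - ((i : ℕ) : ℝ)) + 1) =
        qnum q ((i' : ℕ) : ℝ) * qnum q ((n : ℝ) - ((i' : ℕ) : ℝ) + 1) := by
      have a1 : (n : ℝ) - ((n : ℝ) - ((i : ℕ) : ℝ)) + 1 = ((i' : ℕ) : ℝ) := by
        rw [e2]; ring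
      have a2 : (n : ℝ) - ((i : ℕ) : ℝ) = (n : ℝ) - ((i' : ℕ) : ℝ) + 1 := by
        rw [e2]; ring
      rw [a1, a2]; ring
    rw [hargs]
    have : (-1 : ℝ) / 2 = -(1 : ℝ) / 2 := by norm_num
    rw [this]
    ring
  · rw [if_neg (by omega), if_neg h]
    ring

lemma s_mul_sinv {q : ℝ} (hq : 0 < q) :
    q ^ ((1 : ℝ) / 2) * q ^ (-(1 : ℝ) / 2) = 1 := by
  rw [← Real.rpow_add hq]
  norm_num

lemma dualize_tOne {q : ℝ} (hq : 0 < q) (n : ℕ) :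
    dualize q n (tOne q n) = (-(q ^ ((1 : ℝ) / 2))) • topOne q n := by
  rw [tOne, dualize_mul hq, dualize_K, dualize_Jp, topOne, Matrix.smul_mul]

lemma dualize_tNegOne {q : ℝ} (hq : 0 < q) (n : ℕ) :
    dualize q n (tNegOne q n) = (-(q ^ (-(1 : ℝ) / 2))) • topNegOne q n := by
  rw [tNegOne, dualize_neg, dualize_mul hq, dualize_K, dualize_Jm, topNegOne,
    Matrix.smul_mul, smul_neg]

lemma dualize_topOne {q : ℝ} (hq : 0 < q) (n : ℕ) :
    dualize q n (topOne q n) = (-(q ^ ((1 : ℝ) / 2))) • tOne q n := by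
  rw [topOne, dualize_mul hq, dualize_Kinv, dualize_Jp, tOne, Matrix.mul_smul]

lemma dualize_topNegOne {q : ℝ} (hq : 0 < q) (n : ℕ) :
    dualize q n (topNegOne q n) = (-(q ^ (-(1 : ℝ) / 2))) • tNegOne q n := by
  rw [topNegOne, dualize_neg, dualize_mul hq, dualize_Kinv, dualize_Jm, tNegOne,
    Matrix.mul_smul, smul_neg]

lemma dualize_JpJm {q : ℝ} (hq : 0 < q) (n : ℕ) :
    dualize q n (Jpmat q n * Jmmat q n) = Jmmat q n * Jpmat q n := by
  rw [dualize_mul hq, dualize_Jp, dualize_Jm, Matrix.smul_mul, Matrix.mul_smul,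
    smul_smul]
  have : (-(q ^ (-(1 : ℝ) / 2))) * (-(q ^ ((1 : ℝ) / 2))) = 1 := by
    have := s_mul_sinv hq
    nlinarith [s_mul_sinv hq]
  rw [this, one_smul]

lemma dualize_JmJp {q : ℝ} (hq : 0 < q) (n : ℕ) :
    dualize q n (Jmmat q n * Jpmat q n) = Jpmat q n * Jmmat q n := by
  rw [dualize_mul hq, dualize_Jp, dualize_Jm, Matrix.smul_mul, Matrix.mul_smul,
    smul_smul]
  have : (-(q ^ ((1 : ℝ) / 2))) * (-(q ^ (-(1 : ℝ) / 2))) = 1 := by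
    nlinarith [s_mul_sinv hq]
  rw [this, one_smul]

lemma dualize_tZero {q : ℝ} (hq : 0 < q) (n : ℕ) :
    dualize q n (tZero q n) = topZero q n := by
  rw [tZero, dualize_neg, dualize_smul, dualize_sub, dualize_smul, dualize_smul,
    dualize_JpJm hq, dualize_JmJp hq, topZero]
  rw [← smul_neg, neg_sub]

lemma dualize_topZero {q : ℝ} (hq : 0 < q) (n : ℕ) :
    dualize q n (topZero q n) = tZero q n := by
  rw [topZero, dualize_smul, dualize_sub, dualize_smul, dualize_smul,
    dualize_JpJm hq, dualize_JmJp hq, tZero]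
  rw [← smul_neg, neg_sub]

theorem adjoint_pairing_exchanges_t_and_top (q : ℝ) (hq : 0 < q) (hq1 : q ≠ 1)
    (n₁ n₂ : ℕ) :
    -- Σ_A (t^op_{−A})† ⊗ (t_A)† = Σ_A t_{−A} ⊗ t^op_A
    dualize q n₁ (topOne q n₁) ⊗ₖ dualize q n₂ (tNegOne q n₂)
      + dualize q n₁ (topZero q n₁) ⊗ₖ dualize q n₂ (tZero q n₂)
      + dualize q n₁ (topNegOne q n₁) ⊗ₖ dualize q n₂ (tOne q n₂)
    = tOne q n₁ ⊗ₖ topNegOne q n₂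
      + tZero q n₁ ⊗ₖ topZero q n₂
      + tNegOne q n₁ ⊗ₖ topOne q n₂ := by
  rw [dualize_topOne hq, dualize_tNegOne hq, dualize_topZero hq, dualize_tZero hq,
    dualize_topNegOne hq, dualize_tOne hq]
  rw [Matrix.smul_kronecker, Matrix.kronecker_smul, Matrix.smul_kronecker,
    Matrix.kronecker_smul, smul_smul, smul_smul]
  have h1 : (-(q ^ (-(1 : ℝ) / 2))) * (-(q ^ ((1 : ℝ) / 2))) = 1 := by
    nlinarith [s_mul_sinv hq]
  have h2 : (-(q ^ ((1 : ℝ) / 2))) * (-(q ^ (-(1 : ℝ) / 2))) = 1 := by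
    nlinarith [s_mul_sinv hq]
  rw [h1, h2, one_smul, one_smul]

end
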